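/- For every r > 1 and φ ∈ (-π/2,π/2), the Hessian of F_r(v) = |v|^r on ℝ² \ {0} satisfies (1/2)(H(F_r)(v) O_φ + O_{-φ} H(F_r)(v)) = r|v|^{r-2} cos φ · D_{r,φ}(v), where O_φ is the rotation matrix by angle φ. -/

import Mathlib

noncomputable section
open Real Matrix

def Kmat (α : ℝ) : Matrix (Fin 2) (Fin 2) ℝ :=
  !![Real.cos α, Real.sin α; Real.sin α, -Real.cos α]

def Omat (φ : ℝ) : Matrix (Fin 2) (Fin 2) ℝ :=
  !![Real.cos φ, -Real.sin φ; Real.sin φ, Real.cos φ]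

/-- The matrix `D_{r,φ}(v)` of Bakry, for `v ∈ ℝ² ≅ ℂ`. -/
def DmatC (r φ : ℝ) (v : ℂ) : Matrix (Fin 2) (Fin 2) ℝ :=
  (r / 2) • ((1 : Matrix (Fin 2) (Fin 2) ℝ) +
    ((1 - 2 / r) / Real.cos φ) • Kmat (2 * Complex.arg v - φ))

def dir : Fin 2 → ℂ := ![1, Complex.I]

/-- The Hessian of `F_r(v) = |v|^r` on `ℝ² ≅ ℂ`. -/
def HFr (r : ℝ) (v : ℂ) : Matrix (Fin 2) (Fin 2) ℝ :=
  Matrix.of fun i j =>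
    deriv (fun s : ℝ =>
      deriv (fun t : ℝ => ‖v + (s : ℂ) * dir i + (t : ℂ) * dir j‖ ^ r) 0) 0

lemma normSq_rpow (z : ℂ) (p : ℝ) :
    Complex.normSq z ^ (p / 2) = ‖z‖ ^ p := by
  rw [← Complex.sq_norm, ← Real.rpow_natCast ‖z‖ 2,
    ← Real.rpow_mul (norm_nonneg z)]
  norm_num
  congr 1
  ring

lemma poly_hasDerivAt (A B C : ℝ) :
    HasDerivAt (fun t : ℝ => A + B * t + C * t ^ 2) B 0 := by
  have h2 : HasDerivAt (fun t : ℝ => A + B * t + C * t ^ 2) _ 0 := ((hasDerivAt_const (0 : ℝ) A).add ((hasDerivAt_id (0 : ℝ)).const_mul B)).add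
    ((hasDerivAt_pow 2 (0 : ℝ)).const_mul C)
  simpa using h2

lemma lemA (r : ℝ) (w d : ℂ) (hw : w ≠ 0) :
    HasDerivAt (fun t : ℝ => ‖w + (t : ℂ) * d‖ ^ r)
      (r * Complex.normSq w ^ ((r - 2) / 2) * (w * (starRingEnd ℂ) d).re) 0 := by
  have hfun : (fun t : ℝ => ‖w + (t : ℂ) * d‖ ^ r)
      = fun t : ℝ => (Complex.normSq w + 2 * (w * (starRingEnd ℂ) d).re * t
          + Complex.normSq d * t ^ 2) ^ (r / 2) := by
    funext t
    rw [← normSq_rpow]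
    congr 1
    simp only [Complex.normSq_apply, Complex.add_re, Complex.add_im, Complex.mul_re,
      Complex.mul_im, Complex.ofReal_re, Complex.ofReal_im, Complex.conj_re, Complex.conj_im]
    ring
  rw [hfun]
  have hA : Complex.normSq w ≠ 0 := by simpa using hw
  have hinner := poly_hasDerivAt (Complex.normSq w) (2 * (w * (starRingEnd ℂ) d).re)
    (Complex.normSq d)
  have hcomp := hinner.rpow_const (p := r / 2) (Or.inl (by simpa using hA))
  convert hcomp using 1
  norm_num
  rw [show r / 2 - 1 = (r - 2) / 2 by ring]
  ring

lemma linL_hasDerivAt (v d e : ℂ) :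
    HasDerivAt (fun s : ℝ => ((v + (s : ℂ) * d) * (starRingEnd ℂ) e).re)
      ((d * (starRingEnd ℂ) e).re) 0 := by
  have h2 : HasDerivAt (fun s : ℝ => (v * (starRingEnd ℂ) e).re + (d * (starRingEnd ℂ) e).re * s) _ 0 :=
    (hasDerivAt_const (0 : ℝ) ((v * (starRingEnd ℂ) e).re)).add
    ((hasDerivAt_id (0 : ℝ)).const_mul ((d * (starRingEnd ℂ) e).re))
  have hfun : (fun s : ℝ => ((v + (s : ℂ) * d) * (starRingEnd ℂ) e).re)
      = fun s : ℝ => (v * (starRingEnd ℂ) e).re + (d * (starRingEnd ℂ) e).re * s := by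
    funext s
    simp only [Complex.add_re, Complex.mul_re, Complex.add_im, Complex.mul_im,
      Complex.ofReal_re, Complex.ofReal_im, Complex.conj_re, Complex.conj_im]
    ring
  rw [hfun]
  simpa using h2

lemma lemB (r : ℝ) (v d e : ℂ) (hv : v ≠ 0) :
    HasDerivAt (fun s : ℝ => r * Complex.normSq (v + (s : ℂ) * d) ^ ((r - 2) / 2)
        * ((v + (s : ℂ) * d) * (starRingEnd ℂ) e).re)
      (r * (r - 2) * Complex.normSq v ^ ((r - 4) / 2) * (v * (starRingEnd ℂ) d).re
          * (v * (starRingEnd ℂ) e).re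
        + r * Complex.normSq v ^ ((r - 2) / 2) * (d * (starRingEnd ℂ) e).re) 0 := by
  have hA : Complex.normSq v ≠ 0 := by simpa using hv
  have hp : HasDerivAt (fun s : ℝ => Complex.normSq (v + (s : ℂ) * d))
      (2 * (v * (starRingEnd ℂ) d).re) 0 := by
    have hfun : (fun s : ℝ => Complex.normSq (v + (s : ℂ) * d))
        = fun s : ℝ => Complex.normSq v + 2 * (v * (starRingEnd ℂ) d).re * s
            + Complex.normSq d * s ^ 2 := by
      funext s
      simp only [Complex.normSq_apply, Complex.add_re, Complex.add_im, Complex.mul_re,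
        Complex.mul_im, Complex.ofReal_re, Complex.ofReal_im, Complex.conj_re, Complex.conj_im]
      ring
    rw [hfun]
    exact poly_hasDerivAt _ _ _
  have h2 := hp.rpow_const (p := (r - 2) / 2) (Or.inl (by simpa using hA))
  have h3 : HasDerivAt (fun s : ℝ => r * (Complex.normSq (v + (s : ℂ) * d) ^ ((r - 2) / 2)
      * ((v + (s : ℂ) * d) * (starRingEnd ℂ) e).re)) _ 0 :=
    ((h2.mul (linL_hasDerivAt v d e)).const_mul r)
  convert h3 using 1
  · funext s; ring
  · norm_num
    rw [show (r - 2) / 2 - 1 = (r - 4) / 2 by ring]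
    ring

lemma HFr_apply (r : ℝ) (v : ℂ) (hv : v ≠ 0) (i j : Fin 2) :
    HFr r v i j =
      r * (r - 2) * Complex.normSq v ^ ((r - 4) / 2) * (v * (starRingEnd ℂ) (dir i)).re
          * (v * (starRingEnd ℂ) (dir j)).re
        + r * Complex.normSq v ^ ((r - 2) / 2) * (dir i * (starRingEnd ℂ) (dir j)).re := by
  have hcont : ∀ᶠ s : ℝ in nhds 0, v + (s : ℂ) * dir i ≠ 0 := by
    have hc : ContinuousAt (fun s : ℝ => v + (s : ℂ) * dir i) 0 := by fun_prop
    have := hc.eventually_ne (by simpa using hv)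
    simpa using this
  have hEq : (fun s : ℝ =>
        deriv (fun t : ℝ => ‖v + (s : ℂ) * dir i + (t : ℂ) * dir j‖ ^ r) 0)
      =ᶠ[nhds 0] fun s : ℝ => r * Complex.normSq (v + (s : ℂ) * dir i) ^ ((r - 2) / 2)
        * ((v + (s : ℂ) * dir i) * (starRingEnd ℂ) (dir j)).re :=
    hcont.mono fun s hs => (lemA r _ _ hs).deriv
  show deriv _ 0 = _
  rw [hEq.deriv_eq, (lemB r v (dir i) (dir j) hv).deriv]

theorem stmt18 (r φ : ℝ) (hr : 1 < r) (hφ : φ ∈ Set.Ioo (-(π / 2)) (π / 2))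
    (v : ℂ) (hv : v ≠ 0) :
    (1 / 2 : ℝ) • (HFr r v * Omat φ + Omat (-φ) * HFr r v) =
      (r * ‖v‖ ^ (r - 2) * Real.cos φ) • DmatC r φ v := by
  have hc : Real.cos φ ≠ 0 := ne_of_gt (Real.cos_pos_of_mem_Ioo hφ)
  have hr0 : r ≠ 0 := by linarith
  have hApos : 0 < Complex.normSq v := Complex.normSq_pos.2 hv
  have hRpos : 0 < ‖v‖ := norm_pos_iff.mpr hv
  have hpow : Complex.normSq v ^ ((r - 2) / 2)
      = Complex.normSq v ^ ((r - 4) / 2) * Complex.normSq v := by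
    rw [show (r - 2) / 2 = (r - 4) / 2 + 1 by ring, Real.rpow_add hApos, Real.rpow_one]
  have habs : ‖v‖ ^ (r - 2) = Complex.normSq v ^ ((r - 2) / 2) :=
    (normSq_rpow v (r - 2)).symm
  have hkey : Complex.normSq v ^ ((r - 4) / 2) * ‖v‖ ^ 2
      = ‖v‖ ^ (r - 2) := by
    rw [Complex.sq_norm, habs]; exact hpow.symm
  have hre : v.re = ‖v‖ * Real.cos (Complex.arg v) := by
    rw [Complex.cos_arg hv]; field_simp
  have him : v.im = ‖v‖ * Real.sin (Complex.arg v) := by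
    rw [Complex.sin_arg]; field_simp
  set R : ℝ := ‖v‖ with hR
  set cψ : ℝ := Real.cos (Complex.arg v) with hcψ
  set sψ : ℝ := Real.sin (Complex.arg v) with hsψ
  have hP : sψ ^ 2 + cψ ^ 2 = 1 := Real.sin_sq_add_cos_sq _
  have hH : HFr r v = !![r * R ^ (r - 2) * ((r - 2) * cψ * cψ + 1),
      r * R ^ (r - 2) * ((r - 2) * cψ * sψ);
      r * R ^ (r - 2) * ((r - 2) * sψ * cψ),
      r * R ^ (r - 2) * ((r - 1) - (r - 2) * (cψ * cψ))] := by
    ext i j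
    fin_cases i <;> fin_cases j <;>
    · simp only [HFr_apply r v hv, dir, Fin.mk_zero, Fin.mk_one]
      simp [Complex.mul_re, Complex.mul_im]
      try simp only [hre, him]
      try simp only [← habs]
      first
      | linear_combination (r * (r - 2) * cψ * cψ) * hkey
      | linear_combination (r * (r - 2) * cψ * sψ) * hkey
      | linear_combination (r * (r - 2) * sψ * sψ) * hkey
        + (r * (r - 2) * R ^ (r - 2)) * hP
  rw [hH]
  ext i j
  fin_cases i <;> fin_cases j <;>
  · simp [DmatC, Kmat, Omat, Matrix.mul_apply, Fin.sum_univ_two, Matrix.one_apply,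
      Fin.mk_zero, Fin.mk_one]
    try simp only [Real.cos_sub, Real.sin_sub, Real.cos_two_mul, Real.sin_two_mul]
    field_simp
    ring
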